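/- Fix ω, δ, a, ρ, α > 0 with α ≤ 1. There exists a constant K > 0 such that for all E > 2/(6δρ), any n* > 1 satisfying the log-demand first-order condition 0 = (α²ω²/(2δ))(ln n* + ln a)/n* - (αω/(δE))(ln n* + ln a + 1) + (2/E)(1/(δE) - 6ρ)n* satisfies n* ≤ K·a·E/ρ. -/

import Mathlib

open Real

set_option maxHeartbeats 1600000

theorem log_demand_model_size_big_O
    (ω δ a ρ α : ℝ) (hω : 0 < ω) (hδ : 0 < δ) (ha : 0 < a) (hρ : 0 < ρ)
    (hα : 0 < α) (hα1 : α ≤ 1) :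
    ∃ K : ℝ, 0 < K ∧ ∀ E n : ℝ, 2 / (6 * δ * ρ) < E → 1 < n →
      (0 =
        (α ^ 2 * ω ^ 2 / (2 * δ)) * (Real.log n + Real.log a) / n
          - (α * ω / (δ * E)) * (Real.log n + Real.log a + 1)
          + (2 / E) * (1 / (δ * E) - 6 * ρ) * n) →
      n ≤ K * a * E / ρ := by
  refine ⟨α ^ 2 * ω ^ 2 / (12 * δ) + ω * ρ / (2 * a ^ 2), by positivity, ?_⟩
  intro E n hE hn h
  have hE0 : 0 < E := lt_trans (by positivity) hE
  have hn0 : 0 < n := by linarith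
  have hE1 : 2 < E * (6 * δ * ρ) := (div_lt_iff₀ (by positivity)).mp hE
  have hδE : 1 / (δ * E) < 3 * ρ := by
    rw [div_lt_iff₀ (by positivity)]
    nlinarith
  set L := Real.log n + Real.log a with hLdef
  have hLa : L = Real.log (a * n) := by
    rw [Real.log_mul (ne_of_gt ha) (ne_of_gt hn0)]; ring
  have han : (0:ℝ) < a * n := by positivity
  have hLub : L ≤ a * n := by
    rw [hLa]; linarith [Real.log_le_sub_one_of_pos han]
  have hLlb : -L ≤ 1 / (a * n) - 1 := by
    have := Real.log_le_sub_one_of_pos (show (0:ℝ) < 1/(a*n) by positivity)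
    rw [Real.log_div one_ne_zero (ne_of_gt han), Real.log_one, ← hLa] at this
    linarith
  set A := α ^ 2 * ω ^ 2 / (2 * δ) with hAdef
  have hA0 : 0 < A := by positivity
  set B := α * ω / (δ * E) with hBdef
  have hB0 : 0 < B := by positivity
  have heq : (2 / E) * (6 * ρ - 1 / (δ * E)) * n = A * L / n - B * (L + 1) := by
    nlinarith [h]
  have hkey : 6 * ρ / E * n ≤ A * L / n - B * (L + 1) := by
    rw [← heq]
    have h1 : 0 < 1 / E := by positivity
    have hid : (2 / E) * (6 * ρ - 1 / (δ * E)) * n - 6 * ρ / E * n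
        = (1 / E) * (6 * ρ - 2 * (1 / (δ * E))) * n := by ring
    nlinarith [mul_pos (mul_pos h1 (by linarith : (0:ℝ) < 6 * ρ - 2 * (1 / (δ * E)))) hn0, hid]
  have hBE : B * E = α * ω / δ := by rw [hBdef]; field_simp
  clear_value L A B
  clear h heq hδE hE
  rw [le_div_iff₀ hρ]
  rcases le_or_gt (-1) L with h1 | h1
  · -- L + 1 ≥ 0
    have hALn : A * L / n ≤ A * a := by
      rw [div_le_iff₀ hn0]
      nlinarith
    have hBL : 0 ≤ B * (L + 1) := mul_nonneg hB0.le (by linarith)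
    have hfin : 6 * ρ / E * n ≤ A * a := by linarith
    have hfin2 : 6 * ρ * n ≤ A * a * E := by
      have hmul := mul_le_mul_of_nonneg_right hfin hE0.le
      have hid : 6 * ρ / E * n * E = 6 * ρ * n := by field_simp
      rw [hid] at hmul
      linarith
    have hid2 : α ^ 2 * ω ^ 2 / (12 * δ) * a * E * 6 = A * a * E := by rw [hAdef]; ring
    have hpos : 0 < ω * ρ / (2 * a ^ 2) * a * E :=
      mul_pos (mul_pos (by positivity) ha) hE0
    have hexp : (α ^ 2 * ω ^ 2 / (12 * δ) + ω * ρ / (2 * a ^ 2)) * a * E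
        = α ^ 2 * ω ^ 2 / (12 * δ) * a * E + ω * ρ / (2 * a ^ 2) * a * E := by ring
    rw [hexp]
    linarith
  · -- L < -1
    have hAL : A * L ≤ 0 := mul_nonpos_of_nonneg_of_nonpos hA0.le (by linarith)
    have hAn : A * L / n ≤ 0 := div_nonpos_of_nonpos_of_nonneg hAL hn0.le
    have h2 : -(L + 1) ≤ 1 / (a * n) := by
      have : (0:ℝ) < 1 / (a * n) := by positivity
      linarith
    have h3 : 1 / (a * n) ≤ 1 / a := by
      apply one_div_le_one_div_of_le ha
      nlinarith
    have h4 : 6 * ρ / E * n ≤ B * (1 / a) := by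
      calc 6 * ρ / E * n ≤ -(B * (L + 1)) := by linarith
        _ = B * (-(L + 1)) := by ring
        _ ≤ B * (1 / (a * n)) := mul_le_mul_of_nonneg_left h2 hB0.le
        _ ≤ B * (1 / a) := mul_le_mul_of_nonneg_left h3 hB0.le
    have h5 : 6 * δ * a * ρ * n ≤ α * ω := by
      have hmul := mul_le_mul_of_nonneg_right h4 (by positivity : (0:ℝ) ≤ E * (δ * a))
      have hidl : 6 * ρ / E * n * (E * (δ * a)) = 6 * δ * a * ρ * n := by
        field_simp
      have hidr : B * (1 / a) * (E * (δ * a)) = α * ω := by rw [hBdef]; field_simp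
      rw [hidl, hidr] at hmul
      exact hmul
    have h5' : 6 * δ * a * ρ * n ≤ ω := by nlinarith
    have hprod : (6 * δ * a * ρ * n) * 2 ≤ ω * (E * (6 * δ * ρ)) := by
      have := mul_le_mul h5' (le_of_lt hE1) (by norm_num) hω.le
      linarith
    have h6 : 2 * a * n ≤ ω * E := by
      have h12 : (6 * δ * ρ) * (2 * a * n) ≤ (6 * δ * ρ) * (ω * E) := by linarith
      exact le_of_mul_le_mul_left h12 (by positivity)
    have h8 : n * ρ ≤ ω * ρ / (2 * a ^ 2) * a * E := by
      rw [show ω * ρ / (2 * a ^ 2) * a * E = ω * ρ * E / (2 * a) by field_simp,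
        le_div_iff₀ (by positivity : (0:ℝ) < 2 * a)]
      have := mul_le_mul_of_nonneg_left h6 hρ.le
      linarith
    have hpos : 0 < α ^ 2 * ω ^ 2 / (12 * δ) * a * E :=
      mul_pos (mul_pos (by positivity) ha) hE0
    have hexp : (α ^ 2 * ω ^ 2 / (12 * δ) + ω * ρ / (2 * a ^ 2)) * a * E
        = α ^ 2 * ω ^ 2 / (12 * δ) * a * E + ω * ρ / (2 * a ^ 2) * a * E := by ring
    rw [hexp]
    linarith
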